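/- arXiv:math/0407400 — 3 statements merged into one kernel-verified Lean document; each statement's English description precedes it below -/
import Mathlib

section
/- In VB_n, for 1 ≤ i < j ≤ n and any index k with 1 ≤ k ≤ n−1 satisfying k < i−1, or i < k < j−1, or k > j, the following conjugating rules hold: ρ_k λ_{ij} ρ_k = λ_{ij} and ρ_k λ_{ji} ρ_k = λ_{ji}. -/
/-- Generators of the virtual braid group `VB n`:
`Sum.inl i` is the braid generator σ_{i+1} and `Sum.inr i` is the virtual
generator ρ_{i+1} (0-based index `i : Fin (n-1)`, paper indices are 1-based). -/
abbrev VBGen (n : ℕ) := Fin (n - 1) ⊕ Fin (n - 1)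

/-- σ-letter in the free group. -/
def fS {n : ℕ} (i : Fin (n - 1)) : FreeGroup (VBGen n) := FreeGroup.of (Sum.inl i)

/-- ρ-letter in the free group. -/
def fR {n : ℕ} (i : Fin (n - 1)) : FreeGroup (VBGen n) := FreeGroup.of (Sum.inr i)

/-- The defining relators of the virtual braid group `VB_n`. -/
def vbRels (n : ℕ) : Set (FreeGroup (VBGen n)) :=
  {r | (∃ i j : Fin (n - 1), (i : ℕ) + 1 = (j : ℕ) ∧
          r = fS i * fS j * fS i * (fS j * fS i * fS j)⁻¹) ∨
       (∃ i j : Fin (n - 1), (i : ℕ) + 2 ≤ (j : ℕ) ∧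
          r = fS i * fS j * (fS j * fS i)⁻¹) ∨
       (∃ i j : Fin (n - 1), (i : ℕ) + 1 = (j : ℕ) ∧
          r = fR i * fR j * fR i * (fR j * fR i * fR j)⁻¹) ∨
       (∃ i j : Fin (n - 1), (i : ℕ) + 2 ≤ (j : ℕ) ∧
          r = fR i * fR j * (fR j * fR i)⁻¹) ∨
       (∃ i : Fin (n - 1), r = fR i * fR i) ∨
       (∃ i j : Fin (n - 1), ((i : ℕ) + 2 ≤ (j : ℕ) ∨ (j : ℕ) + 2 ≤ (i : ℕ)) ∧
          r = fS i * fR j * (fR j * fS i)⁻¹) ∨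
       (∃ i j : Fin (n - 1), (i : ℕ) + 1 = (j : ℕ) ∧
          r = fR i * fR j * fS i * (fS j * fR i * fR j)⁻¹)}

/-- The virtual braid group `VB_n` as a presented group. -/
abbrev VB (n : ℕ) := PresentedGroup (vbRels n)

/-- The generator σ_i of `VB n`, with the paper's 1-based index `1 ≤ i ≤ n-1`
(junk value `1` outside that range). -/
def sig {n : ℕ} (i : ℕ) : VB n :=
  if h : 1 ≤ i ∧ i ≤ n - 1 then PresentedGroup.of (Sum.inl ⟨i - 1, by omega⟩) else 1

/-- The generator ρ_i of `VB n`, with the paper's 1-based index. -/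
def rho {n : ℕ} (i : ℕ) : VB n :=
  if h : 1 ≤ i ∧ i ≤ n - 1 then PresentedGroup.of (Sum.inr ⟨i - 1, by omega⟩) else 1

/-- The ascending product ρ_a ρ_{a+1} ⋯ ρ_b (equal to `1` if `a > b`). -/
def asc {n : ℕ} (a b : ℕ) : VB n := ((List.range' a (b + 1 - a)).map (rho (n := n))).prod

/-- The descending product ρ_b ρ_{b-1} ⋯ ρ_a (equal to `1` if `a > b`). -/
def desc {n : ℕ} (a b : ℕ) : VB n :=
  (((List.range' a (b + 1 - a)).map (rho (n := n))).reverse).prod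

/-- λ_{k l} for 1-based indices `k ≠ l`:
for `k < l`, λ_{k l} = ρ_{l-1} ⋯ ρ_{k+1} (ρ_k σ_k⁻¹) ρ_{k+1} ⋯ ρ_{l-1};
for `l < k`, λ_{k l} = ρ_{k-1} ⋯ ρ_{l+1} (σ_l⁻¹ ρ_l) ρ_{l+1} ⋯ ρ_{k-1}. -/
def lam {n : ℕ} (k l : ℕ) : VB n :=
  if k < l then desc (k + 1) (l - 1) * (rho k * (sig k)⁻¹) * asc (k + 1) (l - 1)
  else desc (l + 1) (k - 1) * ((sig l)⁻¹ * rho l) * asc (l + 1) (k - 1)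

section Helpers
variable {n : ℕ}

lemma vb_rel {r : FreeGroup (VBGen n)} (hr : r ∈ vbRels n) :
    PresentedGroup.mk (vbRels n) r = 1 :=
  (QuotientGroup.eq_one_iff r).mpr (Subgroup.subset_normalClosure hr)

lemma comm_of_rel {a b : FreeGroup (VBGen n)} (h : a * b * (b * a)⁻¹ ∈ vbRels n) :
    Commute (PresentedGroup.mk (vbRels n) a) (PresentedGroup.mk (vbRels n) b) := by
  have h2 := vb_rel h
  rw [map_mul, map_mul, map_inv, map_mul, mul_inv_eq_one] at h2
  exact h2

lemma rho_eq {k : ℕ} (h1 : 1 ≤ k) (h2 : k ≤ n - 1) :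
    (rho k : VB n) = PresentedGroup.mk (vbRels n) (fR ⟨k - 1, by omega⟩) := by
  rw [rho, dif_pos ⟨h1, h2⟩]; rfl

lemma sig_eq {k : ℕ} (h1 : 1 ≤ k) (h2 : k ≤ n - 1) :
    (sig k : VB n) = PresentedGroup.mk (vbRels n) (fS ⟨k - 1, by omega⟩) := by
  rw [sig, dif_pos ⟨h1, h2⟩]; rfl

lemma rho_junk {k : ℕ} (h : ¬(1 ≤ k ∧ k ≤ n - 1)) : (rho k : VB n) = 1 := by
  rw [rho, dif_neg h]

lemma sig_junk {k : ℕ} (h : ¬(1 ≤ k ∧ k ≤ n - 1)) : (sig k : VB n) = 1 := by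
  rw [sig, dif_neg h]

lemma rho_mul_self (k : ℕ) : (rho k : VB n) * rho k = 1 := by
  by_cases h : 1 ≤ k ∧ k ≤ n - 1
  · rw [rho_eq h.1 h.2, ← map_mul]
    exact vb_rel (Or.inr (Or.inr (Or.inr (Or.inr (Or.inl ⟨_, rfl⟩)))))
  · rw [rho_junk h]; simp

lemma rho_comm {k m : ℕ} (h : k + 2 ≤ m) : Commute (rho k : VB n) (rho m) := by
  by_cases hk : 1 ≤ k ∧ k ≤ n - 1
  · by_cases hm : 1 ≤ m ∧ m ≤ n - 1
    · rw [rho_eq hk.1 hk.2, rho_eq hm.1 hm.2]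
      exact comm_of_rel (Or.inr (Or.inr (Or.inr (Or.inl
        ⟨⟨k - 1, by omega⟩, ⟨m - 1, by omega⟩, show k - 1 + 2 ≤ m - 1 by omega, rfl⟩))))
    · rw [rho_junk hm]; exact Commute.one_right _
  · rw [rho_junk hk]; exact Commute.one_left _

lemma rho_braid {k : ℕ} (h1 : 1 ≤ k) (h2 : k + 1 ≤ n - 1) :
    (rho k : VB n) * rho (k + 1) * rho k = rho (k + 1) * rho k * rho (k + 1) := by
  rw [rho_eq h1 (by omega), rho_eq (by omega : 1 ≤ k + 1) h2]
  have h3 := vb_rel (n := n) (Or.inr (Or.inr (Or.inl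
    ⟨⟨k - 1, by omega⟩, ⟨k + 1 - 1, by omega⟩, show k - 1 + 1 = k + 1 - 1 by omega, rfl⟩)))
  rw [map_mul, map_mul, map_inv, map_mul, map_mul, mul_inv_eq_one] at h3
  exact h3

lemma rho_sig_comm {k i : ℕ} (h : k + 2 ≤ i ∨ i + 2 ≤ k) :
    Commute (rho k : VB n) (sig i) := by
  by_cases hk : 1 ≤ k ∧ k ≤ n - 1
  · by_cases hi : 1 ≤ i ∧ i ≤ n - 1
    · rw [rho_eq hk.1 hk.2, sig_eq hi.1 hi.2]
      have hcond : ((⟨i - 1, by omega⟩ : Fin (n - 1)) : ℕ) + 2 ≤ ((⟨k - 1, by omega⟩ : Fin (n - 1)) : ℕ) ∨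
          ((⟨k - 1, by omega⟩ : Fin (n - 1)) : ℕ) + 2 ≤ ((⟨i - 1, by omega⟩ : Fin (n - 1)) : ℕ) := by
        rcases h with h | h
        · exact Or.inr (show k - 1 + 2 ≤ i - 1 by omega)
        · exact Or.inl (show i - 1 + 2 ≤ k - 1 by omega)
      exact Commute.symm (comm_of_rel (a := fS ⟨i - 1, by omega⟩) (b := fR ⟨k - 1, by omega⟩)
        (Or.inr (Or.inr (Or.inr (Or.inr (Or.inr (Or.inl
          ⟨⟨i - 1, by omega⟩, ⟨k - 1, by omega⟩, hcond, rfl⟩)))))))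
    · rw [sig_junk hi]; exact Commute.one_right _
  · rw [rho_junk hk]; exact Commute.one_left _

lemma asc_singleton (a : ℕ) : (asc a a : VB n) = rho a := by
  unfold asc; rw [show a + 1 - a = 1 from by omega]; simp

lemma desc_singleton (a : ℕ) : (desc a a : VB n) = rho a := by
  unfold desc; rw [show a + 1 - a = 1 from by omega]; simp

lemma asc_split {a b c : ℕ} (h1 : a ≤ c + 1) (h2 : c ≤ b) :
    (asc a b : VB n) = asc a c * asc (c + 1) b := by
  unfold asc
  rw [show b + 1 - a = (c + 1 - a) + (b + 1 - (c + 1)) from by omega,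
    ← List.range'_append_1 (s := a) (m := c + 1 - a) (n := b + 1 - (c + 1)),
    show a + (c + 1 - a) = c + 1 from by omega, List.map_append, List.prod_append]

lemma desc_split {a b c : ℕ} (h1 : a ≤ c + 1) (h2 : c ≤ b) :
    (desc a b : VB n) = desc (c + 1) b * desc a c := by
  unfold desc
  rw [show b + 1 - a = (c + 1 - a) + (b + 1 - (c + 1)) from by omega,
    ← List.range'_append_1 (s := a) (m := c + 1 - a) (n := b + 1 - (c + 1)),
    show a + (c + 1 - a) = c + 1 from by omega, List.map_append, List.reverse_append,
    List.prod_append]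

lemma rho_comm_asc {m a b : ℕ} (h : ∀ x, a ≤ x → x ≤ b → m + 2 ≤ x ∨ x + 2 ≤ m) :
    Commute (rho m : VB n) (asc a b) := by
  apply Commute.list_prod_right
  intro x hx
  simp only [List.mem_map, List.mem_range'_1] at hx
  obtain ⟨y, ⟨hy1, hy2⟩, rfl⟩ := hx
  rcases h y hy1 (by omega) with h' | h'
  · exact rho_comm h'
  · exact (rho_comm h').symm

lemma rho_comm_desc {m a b : ℕ} (h : ∀ x, a ≤ x → x ≤ b → m + 2 ≤ x ∨ x + 2 ≤ m) :
    Commute (rho m : VB n) (desc a b) := by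
  apply Commute.list_prod_right
  intro x hx
  simp only [List.mem_reverse, List.mem_map, List.mem_range'_1] at hx
  obtain ⟨y, ⟨hy1, hy2⟩, rfl⟩ := hx
  rcases h y hy1 (by omega) with h' | h'
  · exact rho_comm h'
  · exact (rho_comm h').symm

lemma conj_shiftD {G : Type*} [Group G] (D1 D2 r s : G) (h1 : r * D1 = D1 * r)
    (h2 : s * D2 = D2 * s) (h3 : r * s * r = s * r * s) :
    r * (D1 * s * (r * D2)) = D1 * s * (r * D2) * s := by
  calc r * (D1 * s * (r * D2))
      = (r * D1) * (s * (r * D2)) := by group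
    _ = (D1 * r) * (s * (r * D2)) := by rw [h1]
    _ = D1 * ((r * s * r) * D2) := by group
    _ = D1 * ((s * r * s) * D2) := by rw [h3]
    _ = D1 * (s * r * (s * D2)) := by group
    _ = D1 * (s * r * (D2 * s)) := by rw [h2]
    _ = D1 * s * (r * D2) * s := by group

lemma conj_shiftA {G : Type*} [Group G] (A1 A2 r s : G) (h1 : r * A1 = A1 * r)
    (h2 : s * A2 = A2 * s) (h3 : r * s * r = s * r * s) :
    A2 * r * (s * A1) * r = s * (A2 * r * (s * A1)) := by
  calc A2 * r * (s * A1) * r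
      = A2 * (r * s * (A1 * r)) := by group
    _ = A2 * (r * s * (r * A1)) := by rw [← h1]
    _ = A2 * (r * s * r) * A1 := by group
    _ = A2 * (s * r * s) * A1 := by rw [h3]
    _ = (A2 * s) * (r * s * A1) := by group
    _ = (s * A2) * (r * s * A1) := by rw [← h2]
    _ = s * (A2 * r * (s * A1)) := by group

lemma desc_shift {a b k : ℕ} (ha : 1 ≤ a) (hak : a ≤ k) (hkb : k + 1 ≤ b) (hb : b ≤ n - 1) :
    (rho k : VB n) * desc a b = desc a b * rho (k + 1) := by
  have e0 : (desc a b : VB n) = desc (k + 1) b * desc a k := desc_split (by omega) (by omega)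
  have e1 : (desc (k + 1) b : VB n) = desc (k + 2) b * desc (k + 1) (k + 1) :=
    desc_split (by omega) (by omega)
  have e2 : (desc a k : VB n) = desc k k * desc a (k - 1) := by
    have h := desc_split (n := n) (a := a) (b := k) (c := k - 1) (by omega) (by omega)
    rwa [show k - 1 + 1 = k from by omega] at h
  rw [e0, e1, e2, desc_singleton, desc_singleton]
  exact conj_shiftD _ _ _ _
    ((rho_comm_desc (fun x hx1 hx2 => Or.inl (by omega))).eq)
    ((rho_comm_desc (fun x hx1 hx2 => Or.inr (by omega))).eq)
    (rho_braid (by omega) (by omega))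

lemma asc_shift {a b k : ℕ} (ha : 1 ≤ a) (hak : a ≤ k) (hkb : k + 1 ≤ b) (hb : b ≤ n - 1) :
    (asc a b : VB n) * rho k = rho (k + 1) * asc a b := by
  have e0 : (asc a b : VB n) = asc a k * asc (k + 1) b := asc_split (by omega) (by omega)
  have e1 : (asc a k : VB n) = asc a (k - 1) * asc k k := by
    have h := asc_split (n := n) (a := a) (b := k) (c := k - 1) (by omega) (by omega)
    rwa [show k - 1 + 1 = k from by omega] at h
  have e2 : (asc (k + 1) b : VB n) = asc (k + 1) (k + 1) * asc (k + 2) b :=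
    asc_split (by omega) (by omega)
  rw [e0, e1, e2, asc_singleton, asc_singleton]
  exact conj_shiftA _ _ _ _
    ((rho_comm_asc (fun x hx1 hx2 => Or.inl (by omega))).eq)
    ((rho_comm_asc (fun x hx1 hx2 => Or.inr (by omega))).eq)
    (rho_braid (by omega) (by omega))

lemma conj_core {i j k : ℕ} (hi : 1 ≤ i) (hij : i < j) (hj : j ≤ n)
    (hk1 : 1 ≤ k) (hk2 : k ≤ n - 1)
    (hcase : k + 1 < i ∨ (i < k ∧ k + 1 < j) ∨ j < k)
    (x : VB n) (hx : ∀ m, m + 2 ≤ i ∨ i + 2 ≤ m → Commute (rho m : VB n) x) :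
    rho k * (desc (i + 1) (j - 1) * x * asc (i + 1) (j - 1)) * rho k
      = desc (i + 1) (j - 1) * x * asc (i + 1) (j - 1) := by
  rcases hcase with hc | ⟨hc1, hc2⟩ | hc
  · have hD : Commute (rho k : VB n) (desc (i + 1) (j - 1)) :=
      rho_comm_desc (fun m h1 h2 => Or.inl (by omega))
    have hA : Commute (rho k : VB n) (asc (i + 1) (j - 1)) :=
      rho_comm_asc (fun m h1 h2 => Or.inl (by omega))
    have hX : Commute (rho k : VB n) x := hx k (Or.inl (by omega))
    have hW : Commute (rho k : VB n) (desc (i + 1) (j - 1) * x * asc (i + 1) (j - 1)) :=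
      (hD.mul_right hX).mul_right hA
    rw [hW.eq, mul_assoc, rho_mul_self, mul_one]
  · have hs1 : (rho k : VB n) * desc (i + 1) (j - 1) = desc (i + 1) (j - 1) * rho (k + 1) :=
      desc_shift (by omega) (by omega) (by omega) (by omega)
    have hs2 : (asc (i + 1) (j - 1) : VB n) * rho k = rho (k + 1) * asc (i + 1) (j - 1) :=
      asc_shift (by omega) (by omega) (by omega) (by omega)
    have hX : Commute (rho (k + 1) : VB n) x := hx (k + 1) (Or.inr (by omega))
    calc rho k * (desc (i + 1) (j - 1) * x * asc (i + 1) (j - 1)) * rho k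
        = (rho k * desc (i + 1) (j - 1)) * x * (asc (i + 1) (j - 1) * rho k) := by group
      _ = (desc (i + 1) (j - 1) * rho (k + 1)) * x *
            (rho (k + 1) * asc (i + 1) (j - 1)) := by rw [hs1, hs2]
      _ = desc (i + 1) (j - 1) * (rho (k + 1) * x) *
            (rho (k + 1) * asc (i + 1) (j - 1)) := by group
      _ = desc (i + 1) (j - 1) * (x * rho (k + 1)) *
            (rho (k + 1) * asc (i + 1) (j - 1)) := by rw [hX.eq]
      _ = desc (i + 1) (j - 1) * x *
            ((rho (k + 1) * rho (k + 1)) * asc (i + 1) (j - 1)) := by group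
      _ = desc (i + 1) (j - 1) * x * asc (i + 1) (j - 1) := by
            rw [rho_mul_self, one_mul]
  · have hD : Commute (rho k : VB n) (desc (i + 1) (j - 1)) :=
      rho_comm_desc (fun m h1 h2 => Or.inr (by omega))
    have hA : Commute (rho k : VB n) (asc (i + 1) (j - 1)) :=
      rho_comm_asc (fun m h1 h2 => Or.inr (by omega))
    have hX : Commute (rho k : VB n) x := hx k (Or.inr (by omega))
    have hW : Commute (rho k : VB n) (desc (i + 1) (j - 1) * x * asc (i + 1) (j - 1)) :=
      (hD.mul_right hX).mul_right hA
    rw [hW.eq, mul_assoc, rho_mul_self, mul_one]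

end Helpers

/-- `ν : VB_n → S_n` is characterized by sending both σ_i and ρ_i to the
transposition (i, i+1). -/
def IsNu {n : ℕ} (ν : VB n →* Equiv.Perm (Fin n)) : Prop :=
  ∀ i : Fin (n - 1),
    ν (PresentedGroup.of (Sum.inl i)) =
      Equiv.swap ⟨(i : ℕ), by have := i.isLt; omega⟩ ⟨(i : ℕ) + 1, by have := i.isLt; omega⟩ ∧
    ν (PresentedGroup.of (Sum.inr i)) =
      Equiv.swap ⟨(i : ℕ), by have := i.isLt; omega⟩ ⟨(i : ℕ) + 1, by have := i.isLt; omega⟩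

/-- The subgroup of `VB n` generated by the ρ-generators (a copy of `S_n`). -/
def Rsub (n : ℕ) : Subgroup (VB n) :=
  Subgroup.closure (Set.range fun i : Fin (n - 1) => (PresentedGroup.of (Sum.inr i) : VB n))

/-- The subgroup of `VB n` generated by the λ_{k l} with `1 ≤ k ≠ l ≤ m`;
for `m = n` this is the virtual pure braid group `VP_n`, and in general it is
the canonical copy of `VP_m` inside `VP_n`. -/
def VPsub (n : ℕ) (m : ℕ) : Subgroup (VB n) :=
  Subgroup.closure {x | ∃ k l : ℕ, 1 ≤ k ∧ k ≤ m ∧ 1 ≤ l ∧ l ≤ m ∧ k ≠ l ∧ x = lam k l}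

/-- `V_i^*`: the normal closure, inside the copy of `VP_{i+1}`, of the subgroup
`V_i = ⟨λ_{k,i+1}, λ_{i+1,k} : 1 ≤ k ≤ i⟩`. -/
def Vstar (n : ℕ) (i : ℕ) : Subgroup (VB n) :=
  Subgroup.closure {x | ∃ g ∈ VPsub n (i + 1), ∃ k : ℕ, 1 ≤ k ∧ k ≤ i ∧
    (x = g⁻¹ * lam k (i + 1) * g ∨ x = g⁻¹ * lam (i + 1) k * g)}

/-- for 1 ≤ i < j ≤ n and 1 ≤ k ≤ n-1 with k < i-1, or
i < k < j-1, or k > j, one has ρ_k λ_{ij} ρ_k = λ_{ij} and ρ_k λ_{ji} ρ_k = λ_{ji}. -/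
theorem stmt_2 (n : ℕ) (hn : 2 ≤ n) (i j k : ℕ) (hi : 1 ≤ i) (hij : i < j) (hj : j ≤ n)
    (hk1 : 1 ≤ k) (hk2 : k ≤ n - 1)
    (hcase : k + 1 < i ∨ (i < k ∧ k + 1 < j) ∨ j < k) :
    (rho k * lam i j * rho k : VB n) = lam i j ∧
    (rho k * lam j i * rho k : VB n) = lam j i := by
  have hx1 : ∀ m : ℕ, m + 2 ≤ i ∨ i + 2 ≤ m → Commute (rho m : VB n) (rho i * (sig i)⁻¹) := by
    intro m hm
    have c1 : Commute (rho m : VB n) (rho i) := by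
      rcases hm with h | h
      · exact rho_comm h
      · exact (rho_comm h).symm
    exact c1.mul_right (rho_sig_comm hm).inv_right
  have hx2 : ∀ m : ℕ, m + 2 ≤ i ∨ i + 2 ≤ m → Commute (rho m : VB n) ((sig i)⁻¹ * rho i) := by
    intro m hm
    have c1 : Commute (rho m : VB n) (rho i) := by
      rcases hm with h | h
      · exact rho_comm h
      · exact (rho_comm h).symm
    exact (rho_sig_comm hm).inv_right.mul_right c1
  constructor
  · simp only [lam]
    rw [if_pos hij]
    exact conj_core hi hij hj hk1 hk2 hcase _ hx1
  · simp only [lam]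
    rw [if_neg (by omega : ¬ j < i)]
    exact conj_core hi hij hj hk1 hk2 hcase _ hx2
end

section
/- The virtual pure braid group VP_2 = ker(ν : VB_2 → S_2) is a free group of rank 2, freely generated by the two elements λ_{12} = ρ_1 σ_1^{−1} and λ_{21} = σ_1^{−1} ρ_1; that is, the homomorphism from the free group on two generators to VB_2 sending the generators to λ_{12} and λ_{21} is injective with image ker ν. -/
set_option linter.unnecessarySimpa false

namespace Stmt9Aux

open SemidirectProduct

/-- The generator-swapping automorphism of `FreeGroup Bool`. -/
def notEquiv : Bool ≃ Bool := ⟨not, not, Bool.not_not, Bool.not_not⟩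

def swAut : MulAut (FreeGroup Bool) := FreeGroup.freeGroupCongr notEquiv

lemma swAut_swAut (x : FreeGroup Bool) : swAut (swAut x) = x := by
  have h := (FreeGroup.freeGroupCongr notEquiv).symm_apply_apply x
  rwa [FreeGroup.freeGroupCongr_symm, show notEquiv.symm = notEquiv from rfl] at h

lemma swAut_sq : swAut * swAut = 1 := by
  ext x
  exact swAut_swAut x

lemma swAut_inv : swAut⁻¹ = swAut := inv_eq_of_mul_eq_one_right swAut_sq

lemma negone_ne : ((-1 : ℤˣ) = 1) = False := by decide

/-- A hom out of `Perm (Fin 2)` determined by an element of order dividing 2. -/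
def hom2 {H : Type*} [Group H] (g : H) (hg : g * g = 1) : Equiv.Perm (Fin 2) →* H where
  toFun p := if Equiv.Perm.sign p = 1 then 1 else g
  map_one' := by simp
  map_mul' p q := by
    rcases Int.units_eq_one_or (Equiv.Perm.sign p) with hp | hp <;>
      rcases Int.units_eq_one_or (Equiv.Perm.sign q) with hq | hq <;>
      simp [map_mul, hp, hq, hg, negone_ne]

def s : Equiv.Perm (Fin 2) := Equiv.swap 0 1

lemma sign_s : Equiv.Perm.sign s = -1 := Equiv.Perm.sign_swap (by decide)

lemma hom2_s {H : Type*} [Group H] (g : H) (hg : g * g = 1) : hom2 g hg s = g := by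
  simp [hom2, sign_s, negone_ne]

lemma s_mul_s : s * s = 1 := Equiv.swap_mul_self _ _

lemma s_inv : s⁻¹ = s := inv_eq_of_mul_eq_one_right s_mul_s

/-- The action of `Perm (Fin 2)` on `FreeGroup Bool`. -/
def θ : Equiv.Perm (Fin 2) →* MulAut (FreeGroup Bool) := hom2 swAut swAut_sq

lemma θ_s : θ s = swAut := hom2_s _ _

/-- The target group `FreeGroup Bool ⋊ S_2`. -/
abbrev G2 := SemidirectProduct (FreeGroup Bool) (Equiv.Perm (Fin 2)) θ

/-- Images of the generators of `VB 2`. -/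
def fgen : VBGen 2 → G2
  | Sum.inl _ => ⟨(FreeGroup.of true)⁻¹, s⟩
  | Sum.inr _ => ⟨1, s⟩

lemma frels : ∀ r ∈ vbRels 2, FreeGroup.lift fgen r = 1 := by
  intro r hr
  rcases hr with ⟨i, j, hij, _⟩ | ⟨i, j, hij, _⟩ | ⟨i, j, hij, _⟩ | ⟨i, j, hij, _⟩ |
    ⟨i, hre⟩ | ⟨i, j, hij, _⟩ | ⟨i, j, hij, _⟩
  · exact absurd hij (by have := i.isLt; have := j.isLt; omega)
  · exact absurd hij (by have := i.isLt; have := j.isLt; omega)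
  · exact absurd hij (by have := i.isLt; have := j.isLt; omega)
  · exact absurd hij (by have := i.isLt; have := j.isLt; omega)
  · subst hre
    rw [fR, map_mul, FreeGroup.lift_apply_of]
    show (⟨1, s⟩ : G2) * ⟨1, s⟩ = 1
    ext
    · simp [mul_left]
    · simp [mul_right, s_mul_s]
  · exact absurd hij (by have := i.isLt; have := j.isLt; omega)
  · exact absurd hij (by have := i.isLt; have := j.isLt; omega)

/-- The homomorphism `VB 2 →* G2`. -/
def Φ : VB 2 →* G2 := PresentedGroup.toGroup frels

def σ1 : VB 2 := PresentedGroup.of (Sum.inl (0 : Fin (2 - 1)))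
def ρ1 : VB 2 := PresentedGroup.of (Sum.inr (0 : Fin (2 - 1)))

lemma sig1 : (sig 1 : VB 2) = σ1 := rfl
lemma rho1 : (rho 1 : VB 2) = ρ1 := rfl

lemma lam12 : (lam 1 2 : VB 2) = ρ1 * σ1⁻¹ := by
  simp [lam, desc, asc, sig1, rho1]

lemma lam21 : (lam 2 1 : VB 2) = σ1⁻¹ * ρ1 := by
  simp [lam, desc, asc, sig1, rho1]

lemma rho_sq : ρ1 * ρ1 = 1 := by
  have hmem : (fR (0 : Fin (2 - 1)) * fR 0 : FreeGroup (VBGen 2)) ∈ vbRels 2 :=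
    Or.inr (Or.inr (Or.inr (Or.inr (Or.inl ⟨0, rfl⟩))))
  have h1 : PresentedGroup.mk (vbRels 2) (fR (0 : Fin (2 - 1)) * fR 0) = 1 :=
    (QuotientGroup.eq_one_iff _).2 (Subgroup.subset_normalClosure hmem)
  rwa [map_mul] at h1

lemma rho_inv : ρ1⁻¹ = ρ1 := inv_eq_of_mul_eq_one_right rho_sq

lemma rho_cancel (x : VB 2) : ρ1 * (ρ1 * x) = x := by
  rw [← mul_assoc, rho_sq, one_mul]

/-- The free group mapped into `VB 2` on λ₁₂, λ₂₁. -/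
def L : FreeGroup Bool →* VB 2 :=
  FreeGroup.lift (fun b : Bool => if b then (lam 1 2 : VB 2) else lam 2 1)

def R : Equiv.Perm (Fin 2) →* VB 2 := hom2 ρ1 rho_sq

lemma R_s : R s = ρ1 := hom2_s _ _

lemma swAut_of (b : Bool) : swAut (FreeGroup.of b) = FreeGroup.of (!b) := by
  simp [swAut, notEquiv]

lemma hcomp : ∀ g, L.comp (θ g).toMonoidHom = (MulAut.conj (R g)).toMonoidHom.comp L := by
  intro g
  ext b
  rcases Int.units_eq_one_or (Equiv.Perm.sign g) with hg | hg
  · have h1 : θ g = 1 := by simp [θ, hom2, hg]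
    have h2 : R g = 1 := by simp [R, hom2, hg]
    simp [h1, h2]
  · have h1 : θ g = swAut := by simp [θ, hom2, hg, negone_ne]
    have h2 : R g = ρ1 := by simp [R, hom2, hg, negone_ne]
    rw [MonoidHom.comp_apply, MonoidHom.comp_apply, h1, h2]
    cases b <;>
      simp [swAut_of, L, lam12, lam21, MulAut.conj_apply, mul_assoc, rho_inv, rho_cancel, rho_sq]

/-- The homomorphism `G2 →* VB 2`. -/
def Ψ : G2 →* VB 2 := SemidirectProduct.lift L R hcomp

lemma Φ_σ1 : Φ σ1 = ⟨(FreeGroup.of true)⁻¹, s⟩ := PresentedGroup.toGroup.of frels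
lemma Φ_ρ1 : Φ ρ1 = ⟨1, s⟩ := PresentedGroup.toGroup.of frels

lemma ΨΦ : ∀ x : VB 2, Ψ (Φ x) = x := by
  have h : Ψ.comp Φ = MonoidHom.id (VB 2) := by
    apply PresentedGroup.ext
    intro x
    have hfin : ∀ i : Fin (2 - 1), i = 0 := fun i => Fin.fin_one_eq_zero i
    cases x with
    | inl i =>
      rw [hfin i]
      have : Φ σ1 = ⟨(FreeGroup.of true)⁻¹, s⟩ := Φ_σ1
      show Ψ (Φ σ1) = σ1
      rw [this]
      show L (FreeGroup.of true)⁻¹ * R s = σ1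
      rw [map_inv, R_s]
      have hL : L (FreeGroup.of true) = lam 1 2 := by simp [L]
      rw [hL, lam12, mul_inv_rev, inv_inv, rho_inv, mul_assoc, rho_sq, mul_one]
    | inr i =>
      rw [hfin i]
      show Ψ (Φ ρ1) = ρ1
      rw [Φ_ρ1]
      show L 1 * R s = ρ1
      rw [map_one, one_mul, R_s]
  intro x
  have := DFunLike.congr_fun h x
  simpa using this

lemma ΦL : ∀ w : FreeGroup Bool, Φ (L w) = SemidirectProduct.inl w := by
  have h : Φ.comp L = (SemidirectProduct.inl : FreeGroup Bool →* G2) := by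
    apply FreeGroup.ext_hom
    intro b
    have hL : L (FreeGroup.of b) = if b then (lam 1 2 : VB 2) else lam 2 1 := by simp [L]
    rw [MonoidHom.comp_apply, hL]
    cases b
    · rw [if_neg (by simp), lam21, map_mul, map_inv, Φ_σ1, Φ_ρ1]
      apply SemidirectProduct.ext
      · show θ s⁻¹ ((FreeGroup.of true)⁻¹)⁻¹ * θ s⁻¹ 1 = FreeGroup.of false
        rw [s_inv, θ_s, map_one, mul_one, inv_inv, swAut_of]; rfl
      · show s⁻¹ * s = 1
        rw [s_inv, s_mul_s]
    · rw [if_pos rfl, lam12, map_mul, map_inv, Φ_σ1, Φ_ρ1]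
      apply SemidirectProduct.ext
      · show 1 * θ s (θ s⁻¹ ((FreeGroup.of true)⁻¹)⁻¹) = FreeGroup.of true
        rw [one_mul, s_inv, θ_s, inv_inv, swAut_swAut]
      · show s * s⁻¹ = 1
        rw [s_inv, s_mul_s]
  intro w
  exact DFunLike.congr_fun h w

lemma L_inj : Function.Injective L := by
  intro x y hxy
  apply SemidirectProduct.inl_injective (φ := θ)
  rw [← ΦL, ← ΦL, hxy]

end Stmt9Aux

/-- VP_2 = ker(ν : VB_2 → S_2) is free of rank 2, freely
generated by λ_{12} = ρ_1 σ_1⁻¹ and λ_{21} = σ_1⁻¹ ρ_1: the homomorphism from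
the free group on two generators sending them to λ_{12}, λ_{21} is injective
with image ker ν. -/
theorem stmt_9 (ν : VB 2 →* Equiv.Perm (Fin 2)) (hν : IsNu ν) :
    Function.Injective
      (FreeGroup.lift (fun b : Bool => if b then (lam 1 2 : VB 2) else lam 2 1)) ∧
    (FreeGroup.lift (fun b : Bool => if b then (lam 1 2 : VB 2) else lam 2 1)).range
      = ν.ker := by
  open Stmt9Aux in
  refine ⟨L_inj, le_antisymm ?_ ?_⟩
  · -- range L ≤ ker ν
    rintro x ⟨w, rfl⟩
    have hσρ : ν ρ1 = ν σ1 := by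
      rw [σ1, ρ1, (hν 0).1, (hν 0).2]
    have hgen : ∀ b : Bool, ν (L (FreeGroup.of b)) = 1 := by
      intro b
      have hL : L (FreeGroup.of b) = if b then (lam 1 2 : VB 2) else lam 2 1 := by simp [L]
      cases b <;>
        simp [hL, lam12, lam21, map_mul, map_inv, hσρ]
    have hall : ν.comp L = 1 :=
      FreeGroup.ext_hom _ _ (fun b => by simpa using hgen b)
    show ν (L w) = 1
    have := DFunLike.congr_fun hall w
    simpa using this
  · -- ker ν ≤ range L
    intro x hx
    have hx1 : ν x = 1 := hx
    -- rightHom ∘ Φ = ν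
    have hνΦ : (SemidirectProduct.rightHom : G2 →* Equiv.Perm (Fin 2)).comp Φ = ν := by
      apply PresentedGroup.ext
      intro g
      have hswap : ∀ i : Fin (2 - 1),
          (Equiv.swap (⟨(i : ℕ), by have := i.isLt; omega⟩ : Fin 2)
            ⟨(i : ℕ) + 1, by have := i.isLt; omega⟩) = s := by
        intro i
        have h0 : (i : ℕ) = 0 := by have := i.isLt; omega
        have e1 : (⟨(i : ℕ), by have := i.isLt; omega⟩ : Fin 2) = 0 := by
          exact Fin.ext (by simpa using h0)
        have e2 : (⟨(i : ℕ) + 1, by have := i.isLt; omega⟩ : Fin 2) = 1 := by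
          exact Fin.ext (by simpa using h0)
        rw [e1, e2]; rfl
      cases g with
      | inl i =>
        rw [MonoidHom.comp_apply, (hν i).1, hswap i]
        have : Φ (PresentedGroup.of (Sum.inl i)) = ⟨(FreeGroup.of true)⁻¹, s⟩ :=
          PresentedGroup.toGroup.of frels
        rw [this]
        rfl
      | inr i =>
        rw [MonoidHom.comp_apply, (hν i).2, hswap i]
        have : Φ (PresentedGroup.of (Sum.inr i)) = ⟨1, s⟩ :=
          PresentedGroup.toGroup.of frels
        rw [this]
        rfl
    have hker : Φ x ∈ (SemidirectProduct.rightHom : G2 →* Equiv.Perm (Fin 2)).ker := by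
      show SemidirectProduct.rightHom (Φ x) = 1
      have := DFunLike.congr_fun hνΦ x
      simp only [MonoidHom.comp_apply] at this
      rw [this, hx1]
    rw [← SemidirectProduct.range_inl_eq_ker_rightHom] at hker
    obtain ⟨w, hw⟩ := hker
    refine ⟨w, ?_⟩
    show L w = x
    calc L w = Ψ (SemidirectProduct.inl w) := (SemidirectProduct.lift_inl L R hcomp w).symm
      _ = Ψ (Φ x) := by rw [hw]
      _ = x := ΨΦ x
end

section
/- Let F_n be the free group on x_1, …, x_n and define the automorphisms σ̂_i (x_i ↦ x_i x_{i+1} x_i^{−1}, x_{i+1} ↦ x_i, x_l ↦ x_l for l ≠ i, i+1), α_i (x_i ↦ x_{i+1}, x_{i+1} ↦ x_i, x_l ↦ x_l for l ≠ i, i+1), and ε_{ij} (x_i ↦ x_j^{−1} x_i x_j, x_l ↦ x_l for l ≠ i) of F_n. Then there is a (unique) homomorphism φ : VB_n → Aut(F_n) with φ(σ_i) = σ̂_i and φ(ρ_i) = α_i for all 1 ≤ i ≤ n−1; this φ maps VP_n onto the group Cb_n of basis-conjugating automorphisms, i.e. φ(VP_n) = ⟨ε_{ij} : 1 ≤ i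 ≠ j ≤ n⟩, and for each 1 ≤ i ≤ n−1 it maps V_i^* onto D_i = ⟨ε_{i+1,1}, …, ε_{i+1,i}, ε_{1,i+1}, …, ε_{i,i+1}⟩. -/
/-- `e` is the basis-conjugating automorphism ε_{ab} of the free group:
x_a ↦ x_b⁻¹ x_a x_b and x_l ↦ x_l for l ≠ a. -/
def IsEps {n : ℕ} (e : MulAut (FreeGroup (Fin n))) (a b : Fin n) : Prop :=
  e (FreeGroup.of a) = (FreeGroup.of b)⁻¹ * FreeGroup.of a * FreeGroup.of b ∧
  ∀ l : Fin n, l ≠ a → e (FreeGroup.of l) = FreeGroup.of l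

/-- Cb_n = ⟨ε_{ij} : i ≠ j⟩, the group of basis-conjugating automorphisms. -/
def CbSub (n : ℕ) : Subgroup (MulAut (FreeGroup (Fin n))) :=
  Subgroup.closure {e | ∃ a b : Fin n, a ≠ b ∧ IsEps e a b}

/-- D_i = ⟨ε_{i+1,k}, ε_{k,i+1} : 1 ≤ k ≤ i⟩ (paper's 1-based indices; the
1-based index m corresponds to `⟨m-1, _⟩ : Fin n`). -/
def Dsub (n : ℕ) (i : ℕ) : Subgroup (MulAut (FreeGroup (Fin n))) :=
  Subgroup.closure {e | ∃ k : ℕ, 1 ≤ k ∧ k ≤ i ∧ ∃ (hi : i < n) (hk : k - 1 < n),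
    (IsEps e ⟨i, hi⟩ ⟨k - 1, hk⟩ ∨ IsEps e ⟨k - 1, hk⟩ ⟨i, hi⟩)}

/-- `φ : VB_n → Aut(F_n)` sends each σ_i to the Artin automorphism σ̂_i
(x_i ↦ x_i x_{i+1} x_i⁻¹, x_{i+1} ↦ x_i, x_l ↦ x_l otherwise) and each ρ_i to
the permutation automorphism α_i (x_i ↔ x_{i+1}); here `i : Fin (n-1)` is the
0-based version of the paper's index. -/
def IsPhiVW {n : ℕ} (φ : VB n →* MulAut (FreeGroup (Fin n))) : Prop :=
  ∀ i : Fin (n - 1), ∀ (hi : (i : ℕ) < n) (hi1 : (i : ℕ) + 1 < n),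
    (φ (PresentedGroup.of (Sum.inl i))) (FreeGroup.of ⟨(i : ℕ), hi⟩)
        = FreeGroup.of ⟨(i : ℕ), hi⟩ * FreeGroup.of ⟨(i : ℕ) + 1, hi1⟩ *
          (FreeGroup.of ⟨(i : ℕ), hi⟩)⁻¹ ∧
    (φ (PresentedGroup.of (Sum.inl i))) (FreeGroup.of ⟨(i : ℕ) + 1, hi1⟩)
        = FreeGroup.of ⟨(i : ℕ), hi⟩ ∧
    (∀ l : Fin n, (l : ℕ) ≠ (i : ℕ) → (l : ℕ) ≠ (i : ℕ) + 1 →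
      (φ (PresentedGroup.of (Sum.inl i))) (FreeGroup.of l) = FreeGroup.of l) ∧
    (φ (PresentedGroup.of (Sum.inr i))) (FreeGroup.of ⟨(i : ℕ), hi⟩)
        = FreeGroup.of ⟨(i : ℕ) + 1, hi1⟩ ∧
    (φ (PresentedGroup.of (Sum.inr i))) (FreeGroup.of ⟨(i : ℕ) + 1, hi1⟩)
        = FreeGroup.of ⟨(i : ℕ), hi⟩ ∧
    (∀ l : Fin n, (l : ℕ) ≠ (i : ℕ) → (l : ℕ) ≠ (i : ℕ) + 1 →
      (φ (PresentedGroup.of (Sum.inr i))) (FreeGroup.of l) = FreeGroup.of l)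


namespace St17

open FreeGroup

variable {n : ℕ}

lemma autext {f g : MulAut (FreeGroup (Fin n))}
    (h : ∀ x, f (FreeGroup.of x) = g (FreeGroup.of x)) : f = g := by
  have : (f : FreeGroup (Fin n) →* FreeGroup (Fin n)) = g := FreeGroup.ext_hom _ _ h
  exact MulEquiv.toMonoidHom_injective this

def mkAut (f g : Fin n → FreeGroup (Fin n))
    (h1 : ∀ x, FreeGroup.lift g (f x) = FreeGroup.of x)
    (h2 : ∀ x, FreeGroup.lift f (g x) = FreeGroup.of x) : MulAut (FreeGroup (Fin n)) :=
  MonoidHom.toMulEquiv (FreeGroup.lift f) (FreeGroup.lift g)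
    (by ext x; simp [h1 x]) (by ext x; simp [h2 x])

@[simp] lemma mkAut_of (f g : Fin n → FreeGroup (Fin n)) (h1) (h2) (x : Fin n) :
    mkAut f g h1 h2 (FreeGroup.of x) = f x := by
  simp [mkAut, MonoidHom.toMulEquiv]

@[simp] lemma mkAut_inv_of (f g : Fin n → FreeGroup (Fin n)) (h1) (h2) (x : Fin n) :
    (mkAut f g h1 h2)⁻¹ (FreeGroup.of x) = g x := by
  rw [MulAut.inv_def]
  simp [mkAut, MonoidHom.toMulEquiv, MulEquiv.symm]

@[simp] lemma mkAut_symm_of (f g : Fin n → FreeGroup (Fin n)) (h1) (h2) (x : Fin n) :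
    (mkAut f g h1 h2).symm (FreeGroup.of x) = g x :=
  mkAut_inv_of f g h1 h2 x

/-- ε_{ab} : x_a ↦ x_b⁻¹ x_a x_b -/
def eps (a b : Fin n) (hab : a ≠ b) : MulAut (FreeGroup (Fin n)) :=
  mkAut (fun x => if x = a then (of b)⁻¹ * of a * of b else of x)
    (fun x => if x = a then of b * of a * (of b)⁻¹ else of x)
    (by intro x; by_cases hx : x = a <;> simp [hx, hab.symm] <;> group)
    (by intro x; by_cases hx : x = a <;> simp [hx, hab.symm] <;> group)

lemma eps_of_self (a b : Fin n) (hab : a ≠ b) :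
    eps a b hab (of a) = (of b)⁻¹ * of a * of b := by simp [eps]

lemma eps_of_other (a b : Fin n) (hab : a ≠ b) (x : Fin n) (hx : x ≠ a) :
    eps a b hab (of x) = of x := by simp [eps, hx]

lemma eps_inv_of_self (a b : Fin n) (hab : a ≠ b) :
    (eps a b hab)⁻¹ (of a) = of b * of a * (of b)⁻¹ := by simp [eps]

lemma eps_inv_of_other (a b : Fin n) (hab : a ≠ b) (x : Fin n) (hx : x ≠ a) :
    (eps a b hab)⁻¹ (of x) = of x := by simp [eps, hx]

/-- Artin automorphism σ̂ for an (ordered) pair of distinct letters. -/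
def sg2 (u v : Fin n) (huv : u ≠ v) : MulAut (FreeGroup (Fin n)) :=
  mkAut (fun x => if x = u then of u * of v * (of u)⁻¹ else if x = v then of u else of x)
    (fun x => if x = u then of v else if x = v then (of v)⁻¹ * of u * of v else of x)
    (by intro x; by_cases hx : x = u
        · simp [hx, huv.symm, huv]; group
        · by_cases hx2 : x = v <;> simp [hx, hx2, huv.symm, huv] <;> group)
    (by intro x; by_cases hx : x = u
        · simp [hx, huv.symm, huv]
        · by_cases hx2 : x = v <;> simp [hx, hx2, huv.symm, huv] <;> group)

lemma sg2_of_u (u v : Fin n) (h : u ≠ v) : sg2 u v h (of u) = of u * of v * (of u)⁻¹ := by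
  simp [sg2]
lemma sg2_of_v (u v : Fin n) (h : u ≠ v) : sg2 u v h (of v) = of u := by
  simp [sg2, h.symm]
lemma sg2_of_other (u v : Fin n) (h : u ≠ v) (x : Fin n) (h1 : x ≠ u) (h2 : x ≠ v) :
    sg2 u v h (of x) = of x := by simp [sg2, h1, h2]
lemma sg2_inv_of_u (u v : Fin n) (h : u ≠ v) : (sg2 u v h)⁻¹ (of u) = of v := by simp [sg2]
lemma sg2_inv_of_v (u v : Fin n) (h : u ≠ v) :
    (sg2 u v h)⁻¹ (of v) = (of v)⁻¹ * of u * of v := by simp [sg2, h.symm]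
lemma sg2_inv_of_other (u v : Fin n) (h : u ≠ v) (x : Fin n) (h1 : x ≠ u) (h2 : x ≠ v) :
    (sg2 u v h)⁻¹ (of x) = of x := by simp [sg2, h1, h2]

/-- permutation automorphisms -/
def pA : Equiv.Perm (Fin n) →* MulAut (FreeGroup (Fin n)) where
  toFun π := FreeGroup.freeGroupCongr π
  map_one' := by apply autext; intro x; simp
  map_mul' := fun π τ => by apply autext; intro x; simp

@[simp] lemma pA_of (π : Equiv.Perm (Fin n)) (x : Fin n) :
    pA π (of x) = of (π x) := by simp [pA]

@[simp] lemma pA_inv_of (π : Equiv.Perm (Fin n)) (x : Fin n) :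
    (pA π)⁻¹ (of x) = of (π⁻¹ x) := by
  rw [← MonoidHom.map_inv pA]; simp [pA]

@[simp] lemma pA_symm_of (π : Equiv.Perm (Fin n)) (x : Fin n) :
    (pA π).symm (of x) = of (π⁻¹ x) :=
  pA_inv_of π x

def al2 (u v : Fin n) : MulAut (FreeGroup (Fin n)) := pA (Equiv.swap u v)

lemma al2_of (u v x : Fin n) : al2 u v (of x) = of (Equiv.swap u v x) := by simp [al2]

lemma al2_inv (u v : Fin n) : (al2 u v)⁻¹ = al2 u v := by
  rw [al2, ← MonoidHom.map_inv pA, Equiv.swap_inv]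


section Identities
variable {n : ℕ}

lemma braid_s (u v w : Fin n) (huv : u ≠ v) (hvw : v ≠ w) (huw : u ≠ w) :
    sg2 u v huv * sg2 v w hvw * sg2 u v huv = sg2 v w hvw * sg2 u v huv * sg2 v w hvw := by
  apply autext; intro x
  by_cases h1 : x = u <;> by_cases h2 : x = v <;> by_cases h3 : x = w <;>
    simp_all [MulAut.mul_apply, _root_.map_mul, _root_.map_inv, sg2, mkAut_of, huv.symm, hvw.symm, huw.symm] <;>
    group

lemma comm_ss (u v w z : Fin n) (huv : u ≠ v) (hwz : w ≠ z)
    (h1 : u ≠ w) (h2 : u ≠ z) (h3 : v ≠ w) (h4 : v ≠ z) :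
    sg2 u v huv * sg2 w z hwz = sg2 w z hwz * sg2 u v huv := by
  apply autext; intro x
  by_cases e1 : x = u <;> by_cases e2 : x = v <;> by_cases e3 : x = w <;> by_cases e4 : x = z <;>
    simp_all [MulAut.mul_apply, _root_.map_mul, _root_.map_inv, sg2, mkAut_of,
      huv.symm, hwz.symm, h1.symm, h2.symm, h3.symm, h4.symm]

lemma comm_sa (u v w z : Fin n) (huv : u ≠ v)
    (h1 : u ≠ w) (h2 : u ≠ z) (h3 : v ≠ w) (h4 : v ≠ z) :
    sg2 u v huv * al2 w z = al2 w z * sg2 u v huv := by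
  apply autext; intro x
  by_cases e1 : x = u <;> by_cases e2 : x = v <;> by_cases e3 : x = w <;> by_cases e4 : x = z <;>
    simp_all [MulAut.mul_apply, _root_.map_mul, _root_.map_inv, sg2, al2, mkAut_of, Equiv.swap_apply_of_ne_of_ne,
      huv.symm, h1.symm, h2.symm, h3.symm, h4.symm]

lemma mixed_rrs (u v w : Fin n) (huv : u ≠ v) (hvw : v ≠ w) (huw : u ≠ w) :
    al2 u v * al2 v w * sg2 u v huv = sg2 v w hvw * al2 u v * al2 v w := by
  apply autext; intro x
  by_cases h1 : x = u <;> by_cases h2 : x = v <;> by_cases h3 : x = w <;>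
    simp_all [MulAut.mul_apply, _root_.map_mul, _root_.map_inv, sg2, al2, mkAut_of,
      Equiv.swap_apply_of_ne_of_ne, huv.symm, hvw.symm, huw.symm]

lemma braid_a (u v w : Fin n) (huv : u ≠ v) (hvw : v ≠ w) (huw : u ≠ w) :
    al2 u v * al2 v w * al2 u v = al2 v w * al2 u v * al2 v w := by
  apply autext; intro x
  by_cases h1 : x = u <;> by_cases h2 : x = v <;> by_cases h3 : x = w <;>
    simp_all [MulAut.mul_apply, al2, Equiv.swap_apply_of_ne_of_ne,
      huv.symm, hvw.symm, huw.symm]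

lemma comm_aa (u v w z : Fin n)
    (h1 : u ≠ w) (h2 : u ≠ z) (h3 : v ≠ w) (h4 : v ≠ z) :
    al2 u v * al2 w z = al2 w z * al2 u v := by
  apply autext; intro x
  by_cases e1 : x = u <;> by_cases e2 : x = v <;> by_cases e3 : x = w <;> by_cases e4 : x = z <;>
    simp_all [MulAut.mul_apply, al2, Equiv.swap_apply_of_ne_of_ne,
      h1.symm, h2.symm, h3.symm, h4.symm]

lemma al2_sq (u v : Fin n) : al2 u v * al2 u v = 1 := by
  rw [al2, ← MonoidHom.map_mul, Equiv.swap_mul_self, MonoidHom.map_one]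

lemma B1 (u v : Fin n) (h : u ≠ v) : al2 u v * (sg2 u v h)⁻¹ = eps v u h.symm := by
  apply autext; intro x
  by_cases h1 : x = u <;> by_cases h2 : x = v <;>
    simp_all [MulAut.mul_apply, _root_.map_mul, _root_.map_inv, sg2, al2, eps, mkAut_of,
      Equiv.swap_apply_of_ne_of_ne, h.symm]

lemma B2 (u v : Fin n) (h : u ≠ v) : (sg2 u v h)⁻¹ * al2 u v = eps u v h := by
  apply autext; intro x
  by_cases h1 : x = u <;> by_cases h2 : x = v <;>
    simp_all [MulAut.mul_apply, _root_.map_mul, _root_.map_inv, sg2, al2, eps, mkAut_of,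
      Equiv.swap_apply_of_ne_of_ne, h.symm]

lemma C1 (π : Equiv.Perm (Fin n)) (a b : Fin n) (h : a ≠ b) :
    pA π * eps a b h * (pA π)⁻¹ = eps (π a) (π b) (fun e => h (π.injective e)) := by
  apply autext; intro x
  by_cases h1 : x = π a
  · subst h1
    simp [MulAut.mul_apply, _root_.map_mul, _root_.map_inv, eps, mkAut_of]
  · have : π.symm x ≠ a := fun e => h1 (by simp [← e])
    simp [MulAut.mul_apply, eps, mkAut_of, this, h1]

lemma comm_ee (a b c d : Fin n) (hab : a ≠ b) (hcd : c ≠ d)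
    (hac : a ≠ c) (hbc : b ≠ c) (hda : d ≠ a) :
    eps a b hab * eps c d hcd = eps c d hcd * eps a b hab := by
  apply autext; intro x
  by_cases e1 : x = a <;> by_cases e2 : x = c <;>
    simp_all [MulAut.mul_apply, _root_.map_mul, _root_.map_inv, eps, mkAut_of,
      hab.symm, hcd.symm, hac.symm, hbc.symm, hda.symm]

lemma I2 (i a b : Fin n) (hia : i ≠ a) (hib : i ≠ b) (hab : a ≠ b) :
    (eps a b hab)⁻¹ * eps i a hia * eps a b hab
      = eps i b hib * eps i a hia * (eps i b hib)⁻¹ := by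
  apply autext; intro x
  by_cases e1 : x = i <;> by_cases e2 : x = a <;> by_cases e3 : x = b <;>
    simp_all [MulAut.mul_apply, _root_.map_mul, _root_.map_inv, eps, mkAut_of,
      hia.symm, hib.symm, hab.symm] <;> group

lemma I2' (i a b : Fin n) (hia : i ≠ a) (hib : i ≠ b) (hab : a ≠ b) :
    eps a b hab * eps i a hia * (eps a b hab)⁻¹
      = (eps i b hib)⁻¹ * eps i a hia * eps i b hib := by
  apply autext; intro x
  by_cases e1 : x = i <;> by_cases e2 : x = a <;> by_cases e3 : x = b <;>
    simp_all [MulAut.mul_apply, _root_.map_mul, _root_.map_inv, eps, mkAut_of,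
      hia.symm, hib.symm, hab.symm] <;> group

lemma I4 (i a b : Fin n) (hai : a ≠ i) (hbi : b ≠ i) (hab : a ≠ b) :
    (eps a b hab)⁻¹ * eps a i hai * eps a b hab
      = eps i b (Ne.symm hbi) * eps a i hai * (eps i b (Ne.symm hbi))⁻¹ := by
  apply autext; intro x
  by_cases e1 : x = i <;> by_cases e2 : x = a <;> by_cases e3 : x = b <;>
    simp_all [MulAut.mul_apply, _root_.map_mul, _root_.map_inv, eps, mkAut_of,
      hai.symm, hbi.symm, hab.symm] <;> group

lemma I4' (i a b : Fin n) (hai : a ≠ i) (hbi : b ≠ i) (hab : a ≠ b) :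
    eps a b hab * eps a i hai * (eps a b hab)⁻¹
      = (eps i b (Ne.symm hbi))⁻¹ * eps a i hai * eps i b (Ne.symm hbi) := by
  apply autext; intro x
  by_cases e1 : x = i <;> by_cases e2 : x = a <;> by_cases e3 : x = b <;>
    simp_all [MulAut.mul_apply, _root_.map_mul, _root_.map_inv, eps, mkAut_of,
      hai.symm, hbi.symm, hab.symm] <;> group

lemma mcc3 (i a b : Fin n) (hai : a ≠ i) (hbi : b ≠ i) (hab : a ≠ b) :
    eps a b hab * (eps a i hai * eps b i hbi)
      = (eps a i hai * eps b i hbi) * eps a b hab := by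
  apply autext; intro x
  by_cases e1 : x = i <;> by_cases e2 : x = a <;> by_cases e3 : x = b <;>
    simp_all [MulAut.mul_apply, _root_.map_mul, _root_.map_inv, eps, mkAut_of,
      hai.symm, hbi.symm, hab.symm] <;> group

end Identities

section Phi
variable {n : ℕ}

def lo (i : Fin (n - 1)) : Fin n := ⟨i, by have := i.isLt; omega⟩
def hi (i : Fin (n - 1)) : Fin n := ⟨(i : ℕ) + 1, by have := i.isLt; omega⟩

lemma lo_ne_hi (i : Fin (n - 1)) : lo i ≠ hi i := by
  simp only [lo, hi, ne_eq, Fin.mk.injEq]; omega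

def fgen (n : ℕ) : VBGen n → MulAut (FreeGroup (Fin n))
  | .inl i => sg2 (lo i) (hi i) (lo_ne_hi i)
  | .inr i => al2 (lo i) (hi i)

lemma fin_ne {a b : Fin n} (h : (a : ℕ) ≠ (b : ℕ)) : a ≠ b := by
  simp only [ne_eq, Fin.ext_iff]; exact h

lemma rels_hold (n : ℕ) : ∀ r ∈ vbRels n, FreeGroup.lift (fgen n) r = 1 := by
  intro r hr
  rcases hr with ⟨i,j,hij,rfl⟩ | ⟨i,j,hij,rfl⟩ | ⟨i,j,hij,rfl⟩ | ⟨i,j,hij,rfl⟩ |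
    ⟨i,rfl⟩ | ⟨i,j,hij,rfl⟩ | ⟨i,j,hij,rfl⟩
  · simp only [fS, fR, _root_.map_mul, _root_.map_inv, FreeGroup.lift_apply_of, fgen, mul_inv_eq_one]
    have e1 : lo j = hi i := by apply Fin.ext; simp [lo, hi]; omega
    simp only [e1]
    exact braid_s _ _ _ _ _ (fin_ne (by simp [lo, hi]; omega))
  · simp only [fS, fR, _root_.map_mul, _root_.map_inv, FreeGroup.lift_apply_of, fgen, mul_inv_eq_one]
    exact comm_ss _ _ _ _ _ _ (fin_ne (by simp [lo]; omega)) (fin_ne (by simp [lo, hi]; omega))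
      (fin_ne (by simp [lo, hi]; omega)) (fin_ne (by simp [hi]; omega))
  · simp only [fS, fR, _root_.map_mul, _root_.map_inv, FreeGroup.lift_apply_of, fgen, mul_inv_eq_one]
    have e1 : lo j = hi i := by apply Fin.ext; simp [lo, hi]; omega
    simp only [e1]
    exact braid_a _ _ _ (lo_ne_hi i) (by simp only [← e1]; exact lo_ne_hi j)
      (fin_ne (by simp [lo, hi]; omega))
  · simp only [fS, fR, _root_.map_mul, _root_.map_inv, FreeGroup.lift_apply_of, fgen, mul_inv_eq_one]
    exact comm_aa _ _ _ _ (fin_ne (by simp [lo]; omega)) (fin_ne (by simp [lo, hi]; omega))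
      (fin_ne (by simp [lo, hi]; omega)) (fin_ne (by simp [hi]; omega))
  · simp only [fS, fR, _root_.map_mul, _root_.map_inv, FreeGroup.lift_apply_of, fgen, mul_inv_eq_one]
    exact al2_sq _ _
  · simp only [fS, fR, _root_.map_mul, _root_.map_inv, FreeGroup.lift_apply_of, fgen, mul_inv_eq_one]
    rcases hij with hij | hij
    · exact comm_sa _ _ _ _ _ (fin_ne (by simp [lo]; omega)) (fin_ne (by simp [lo, hi]; omega))
        (fin_ne (by simp [lo, hi]; omega)) (fin_ne (by simp [hi]; omega))
    · exact comm_sa _ _ _ _ _ (fin_ne (by simp [lo]; omega)) (fin_ne (by simp [lo, hi]; omega))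
        (fin_ne (by simp [lo, hi]; omega)) (fin_ne (by simp [hi]; omega))
  · simp only [fS, fR, _root_.map_mul, _root_.map_inv, FreeGroup.lift_apply_of, fgen, mul_inv_eq_one]
    have e1 : lo j = hi i := by apply Fin.ext; simp [lo, hi]; omega
    simp only [e1]
    exact mixed_rrs _ _ _ _ (by simp only [← e1]; exact lo_ne_hi j) (fin_ne (by simp [lo, hi]; omega))

def phi (n : ℕ) : VB n →* MulAut (FreeGroup (Fin n)) :=
  PresentedGroup.toGroup (rels_hold n)

@[simp] lemma phi_inl (i : Fin (n - 1)) :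
    phi n (PresentedGroup.of (Sum.inl i)) = sg2 (lo i) (hi i) (lo_ne_hi i) :=
  PresentedGroup.toGroup.of _

@[simp] lemma phi_inr (i : Fin (n - 1)) :
    phi n (PresentedGroup.of (Sum.inr i)) = al2 (lo i) (hi i) :=
  PresentedGroup.toGroup.of _

end Phi

section Lam
variable {n : ℕ}

lemma desc_nil (a b : ℕ) (h : b < a) : (desc a b : VB n) = 1 := by
  have : b + 1 - a = 0 := by omega
  simp [desc, this]

lemma asc_nil (a b : ℕ) (h : b < a) : (asc a b : VB n) = 1 := by
  have : b + 1 - a = 0 := by omega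
  simp [asc, this]

lemma desc_succ (a c : ℕ) (h : a ≤ c + 1) : (desc a (c+1) : VB n) = rho (c+1) * desc a c := by
  unfold desc
  have h1 : c + 1 + 1 - a = (c + 1 - a) + 1 := by omega
  rw [h1, List.range'_concat]
  have h2 : a + (c + 1 - a) = c + 1 := by omega
  simp [h2]

lemma asc_succ (a c : ℕ) (h : a ≤ c + 1) : (asc a (c+1) : VB n) = asc a c * rho (c+1) := by
  unfold asc
  have h1 : c + 1 + 1 - a = (c + 1 - a) + 1 := by omega
  rw [h1, List.range'_concat]
  have h2 : a + (c + 1 - a) = c + 1 := by omega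
  simp [h2]

lemma lam_base_lt (k : ℕ) (hk : 1 ≤ k) : (lam k (k+1) : VB n) = rho k * (sig k)⁻¹ := by
  rw [lam, if_pos (by omega : k < k + 1)]
  have h1 : k + 1 - 1 = k := by omega
  rw [h1, desc_nil _ _ (by omega), asc_nil _ _ (by omega)]
  group

lemma lam_base_gt (k : ℕ) (hk : 1 ≤ k) : (lam (k+1) k : VB n) = (sig k)⁻¹ * rho k := by
  rw [lam, if_neg (by omega)]
  have h1 : k + 1 - 1 = k := by omega
  rw [h1, desc_nil _ _ (by omega), asc_nil _ _ (by omega)]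
  group

lemma lam_step_lt (k l : ℕ) (hk : 1 ≤ k) (hkl : k < l) :
    (lam k (l+1) : VB n) = rho l * lam k l * rho l := by
  obtain ⟨c, rfl⟩ : ∃ c, l = c + 1 := ⟨l - 1, by omega⟩
  rw [lam, if_pos (by omega : k < c + 1 + 1), lam, if_pos hkl]
  have h1 : c + 1 + 1 - 1 = c + 1 := by omega
  have h2 : c + 1 - 1 = c := by omega
  rw [h1, h2, desc_succ _ _ (by omega), asc_succ _ _ (by omega)]
  group

lemma lam_step_gt (k l : ℕ) (hl : 1 ≤ l) (hkl : l < k) :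
    (lam (k+1) l : VB n) = rho k * lam k l * rho k := by
  obtain ⟨c, rfl⟩ : ∃ c, k = c + 1 := ⟨k - 1, by omega⟩
  rw [lam, if_neg (by omega), lam, if_neg (by omega)]
  have h1 : c + 1 + 1 - 1 = c + 1 := by omega
  have h2 : c + 1 - 1 = c := by omega
  rw [h1, h2, desc_succ _ _ (by omega), asc_succ _ _ (by omega)]
  group

lemma phi_sig (k : ℕ) (h1 : 1 ≤ k) (h2 : k ≤ n - 1) (hk : k - 1 < n) (hk' : k < n) :
    phi n (sig k) = sg2 ⟨k-1, hk⟩ ⟨k, hk'⟩ (fin_ne (by simp; omega)) := by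
  rw [sig, dif_pos ⟨h1, h2⟩, phi_inl]
  have e1 : hi (⟨k-1, by omega⟩ : Fin (n-1)) = ⟨k, hk'⟩ := by apply Fin.ext; simp [hi]; omega
  have e2 : lo (⟨k-1, by omega⟩ : Fin (n-1)) = ⟨k-1, hk⟩ := by apply Fin.ext; simp [lo]
  simp only [e1, e2]

lemma phi_rho (k : ℕ) (h1 : 1 ≤ k) (h2 : k ≤ n - 1) (hk : k - 1 < n) (hk' : k < n) :
    phi n (rho k) = al2 ⟨k-1, hk⟩ ⟨k, hk'⟩ := by
  rw [rho, dif_pos ⟨h1, h2⟩, phi_inr]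
  have e1 : hi (⟨k-1, by omega⟩ : Fin (n-1)) = ⟨k, hk'⟩ := by apply Fin.ext; simp [hi]; omega
  have e2 : lo (⟨k-1, by omega⟩ : Fin (n-1)) = ⟨k-1, hk⟩ := by apply Fin.ext; simp [lo]
  simp only [e1, e2]

lemma al2_conj_eps (u v a b : Fin n) (hab : a ≠ b) :
    al2 u v * eps a b hab * al2 u v
      = eps (Equiv.swap u v a) (Equiv.swap u v b)
          (fun e => hab ((Equiv.swap u v).injective e)) := by
  have h := C1 (Equiv.swap u v) a b hab
  rw [show pA (Equiv.swap u v) = al2 u v from rfl, al2_inv] at h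
  exact h

lemma eps_congr {a b a' b' : Fin n} (h : a ≠ b) (h' : a' ≠ b') (e1 : a = a') (e2 : b = b') :
    eps a b h = eps a' b' h' := by subst e1; subst e2; rfl

lemma phi_lam_lt (k l : ℕ) (hk : 1 ≤ k) (hkl : k < l) (hl : l ≤ n) :
    phi n (lam k l) = eps ⟨l-1, by omega⟩ ⟨k-1, by omega⟩
      (fin_ne (by simp only []; omega)) := by
  induction l, hkl using Nat.le_induction with
  | base =>
    rw [lam_base_lt k hk, _root_.map_mul, _root_.map_inv,
      phi_sig k hk (by omega) (by omega) (by omega),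
      phi_rho k hk (by omega) (by omega) (by omega), B1]
    exact eps_congr _ _ (Fin.ext (by simp)) (Fin.ext (by simp))
  | succ l hkl ih =>
    rw [lam_step_lt k l hk hkl, _root_.map_mul, _root_.map_mul,
      phi_rho l (by omega) (by omega) (by omega) (by omega),
      ih (by omega), al2_conj_eps]
    have e1 : Equiv.swap (⟨l-1, by omega⟩ : Fin n) ⟨l, by omega⟩ ⟨l-1, by omega⟩
        = (⟨l, by omega⟩ : Fin n) := Equiv.swap_apply_left _ _
    have e2 : Equiv.swap (⟨l-1, by omega⟩ : Fin n) ⟨l, by omega⟩ ⟨k-1, by omega⟩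
        = (⟨k-1, by omega⟩ : Fin n) := by
      apply Equiv.swap_apply_of_ne_of_ne <;> (apply fin_ne; simp; omega)
    simp only [e1, e2]
    exact eps_congr _ _ (Fin.ext (by simp)) (Fin.ext (by simp))

lemma phi_lam_gt (k l : ℕ) (hl : 1 ≤ l) (hkl : l < k) (hk : k ≤ n) :
    phi n (lam k l) = eps ⟨l-1, by omega⟩ ⟨k-1, by omega⟩
      (fin_ne (by simp only []; omega)) := by
  induction k, hkl using Nat.le_induction with
  | base =>
    rw [lam_base_gt l hl, _root_.map_mul, _root_.map_inv,
      phi_sig l hl (by omega) (by omega) (by omega),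
      phi_rho l hl (by omega) (by omega) (by omega), B2]
    exact eps_congr _ _ (Fin.ext (by simp)) (Fin.ext (by simp))
  | succ k hkl ih =>
    rw [lam_step_gt k l hl hkl, _root_.map_mul, _root_.map_mul,
      phi_rho k (by omega) (by omega) (by omega) (by omega),
      ih (by omega), al2_conj_eps]
    have e1 : Equiv.swap (⟨k-1, by omega⟩ : Fin n) ⟨k, by omega⟩ ⟨k-1, by omega⟩
        = (⟨k, by omega⟩ : Fin n) := Equiv.swap_apply_left _ _
    have e2 : Equiv.swap (⟨k-1, by omega⟩ : Fin n) ⟨k, by omega⟩ ⟨l-1, by omega⟩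
        = (⟨l-1, by omega⟩ : Fin n) := by
      apply Equiv.swap_apply_of_ne_of_ne <;> (apply fin_ne; simp; omega)
    simp only [e1, e2]
    exact eps_congr _ _ (Fin.ext (by simp)) (Fin.ext (by simp))

end Lam

section Nu
variable {n : ℕ}

lemma nu_sig (ν : VB n →* Equiv.Perm (Fin n)) (hν : IsNu ν) (k : ℕ)
    (h1 : 1 ≤ k) (h2 : k ≤ n - 1) (hk : k - 1 < n) (hk' : k < n) :
    ν (sig k) = Equiv.swap ⟨k-1, hk⟩ ⟨k, hk'⟩ := by
  rw [sig, dif_pos ⟨h1, h2⟩, (hν _).1]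
  congr 1 <;> (apply Fin.ext; simp; try omega)

lemma nu_rho (ν : VB n →* Equiv.Perm (Fin n)) (hν : IsNu ν) (k : ℕ)
    (h1 : 1 ≤ k) (h2 : k ≤ n - 1) (hk : k - 1 < n) (hk' : k < n) :
    ν (rho k) = Equiv.swap ⟨k-1, hk⟩ ⟨k, hk'⟩ := by
  rw [rho, dif_pos ⟨h1, h2⟩, (hν _).2]
  congr 1 <;> (apply Fin.ext; simp; try omega)

lemma nu_lam_lt (ν : VB n →* Equiv.Perm (Fin n)) (hν : IsNu ν) (k l : ℕ)
    (hk : 1 ≤ k) (hkl : k < l) (hl : l ≤ n) : ν (lam k l) = 1 := by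
  induction l, hkl using Nat.le_induction with
  | base =>
    rw [lam_base_lt k hk, _root_.map_mul, _root_.map_inv,
      nu_sig ν hν k hk (by omega) (by omega) (by omega),
      nu_rho ν hν k hk (by omega) (by omega) (by omega)]
    group
  | succ l hkl ih =>
    rw [lam_step_lt k l hk hkl, _root_.map_mul, _root_.map_mul,
      nu_rho ν hν l (by omega) (by omega) (by omega) (by omega), ih (by omega)]
    rw [mul_one, Equiv.swap_mul_self]

lemma nu_lam_gt (ν : VB n →* Equiv.Perm (Fin n)) (hν : IsNu ν) (k l : ℕ)
    (hl : 1 ≤ l) (hkl : l < k) (hk : k ≤ n) : ν (lam k l) = 1 := by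
  induction k, hkl using Nat.le_induction with
  | base =>
    rw [lam_base_gt l hl, _root_.map_mul, _root_.map_inv,
      nu_sig ν hν l hl (by omega) (by omega) (by omega),
      nu_rho ν hν l hl (by omega) (by omega) (by omega)]
    group
  | succ k hkl ih =>
    rw [lam_step_gt k l hl hkl, _root_.map_mul, _root_.map_mul,
      nu_rho ν hν k (by omega) (by omega) (by omega) (by omega), ih (by omega)]
    rw [mul_one, Equiv.swap_mul_self]

lemma nu_lam (ν : VB n →* Equiv.Perm (Fin n)) (hν : IsNu ν) (k l : ℕ)
    (hk : 1 ≤ k) (hl : 1 ≤ l) (hkl : k ≠ l) (hk' : k ≤ n) (hl' : l ≤ n) :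
    ν (lam k l) = 1 := by
  rcases Nat.lt_or_ge k l with h | h
  · exact nu_lam_lt ν hν k l hk h hl'
  · exact nu_lam_gt ν hν k l hl (by omega) hk'

end Nu

section PhiVW
variable {n : ℕ}

lemma isPhiVW_phi : IsPhiVW (phi n) := by
  intro i h1 h2
  rw [phi_inl, phi_inr]
  have e1 : (⟨(i : ℕ), h1⟩ : Fin n) = lo i := rfl
  have e2 : (⟨(i : ℕ) + 1, h2⟩ : Fin n) = hi i := rfl
  rw [e1, e2]
  refine ⟨sg2_of_u _ _ _, sg2_of_v _ _ _, ?_, ?_, ?_, ?_⟩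
  · intro l hl1 hl2
    exact sg2_of_other _ _ _ _ (fin_ne (by simpa [lo] using hl1)) (fin_ne (by simpa [hi] using hl2))
  · rw [al2_of, Equiv.swap_apply_left]
  · rw [al2_of, Equiv.swap_apply_right]
  · intro l hl1 hl2
    rw [al2_of, Equiv.swap_apply_of_ne_of_ne (fin_ne (by simpa [lo] using hl1))
      (fin_ne (by simpa [hi] using hl2))]

lemma phi_unique (ψ : VB n →* MulAut (FreeGroup (Fin n))) (hψ : IsPhiVW ψ) : ψ = phi n := by
  apply PresentedGroup.ext
  intro x
  rcases x with i | i
  · rw [phi_inl]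
    obtain ⟨c1, c2, c3, _, _, _⟩ := hψ i (by have := i.isLt; omega) (by have := i.isLt; omega)
    apply autext; intro l
    by_cases hl1 : l = lo i
    · subst hl1; rw [sg2_of_u]; exact c1
    · by_cases hl2 : l = hi i
      · subst hl2; rw [sg2_of_v]; exact c2
      · rw [sg2_of_other _ _ _ _ hl1 hl2]
        exact c3 l (by simpa [lo, Fin.ext_iff] using hl1) (by simpa [hi, Fin.ext_iff] using hl2)
  · rw [phi_inr]
    obtain ⟨_, _, _, c4, c5, c6⟩ := hψ i (by have := i.isLt; omega) (by have := i.isLt; omega)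
    apply autext; intro l
    by_cases hl1 : l = lo i
    · subst hl1; rw [al2_of, Equiv.swap_apply_left]; exact c4
    · by_cases hl2 : l = hi i
      · subst hl2; rw [al2_of, Equiv.swap_apply_right]; exact c5
      · rw [al2_of, Equiv.swap_apply_of_ne_of_ne hl1 hl2]
        exact c6 l (by simpa [lo, Fin.ext_iff] using hl1) (by simpa [hi, Fin.ext_iff] using hl2)

end PhiVW

section Cb
variable {n : ℕ}

lemma isEps_eps (a b : Fin n) (hab : a ≠ b) : IsEps (eps a b hab) a b :=
  ⟨eps_of_self a b hab, fun l hl => eps_of_other a b hab l hl⟩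

lemma isEps_eq {e : MulAut (FreeGroup (Fin n))} {a b : Fin n} (hab : a ≠ b)
    (h : IsEps e a b) : e = eps a b hab := by
  apply autext; intro x
  by_cases hx : x = a
  · subst hx; rw [eps_of_self, h.1]
  · rw [eps_of_other _ _ _ _ hx, h.2 x hx]

lemma conj_mem_closure {G : Type*} [Group G] {T : Set G} (e : G)
    (h : ∀ t ∈ T, e * t * e⁻¹ ∈ Subgroup.closure T) {g : G} (hg : g ∈ Subgroup.closure T) :
    e * g * e⁻¹ ∈ Subgroup.closure T := by
  have h2 : Subgroup.map (MulAut.conj e).toMonoidHom (Subgroup.closure T)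
      ≤ Subgroup.closure T := by
    rw [MonoidHom.map_closure]
    refine (Subgroup.closure_le _).mpr ?_
    rintro x ⟨t, ht, rfl⟩
    exact h t ht
  exact h2 ⟨g, hg, rfl⟩

lemma isEps_pA_conj (π : Equiv.Perm (Fin n)) {e : MulAut (FreeGroup (Fin n))} {a b : Fin n}
    (h : IsEps e a b) : IsEps (pA π * e * (pA π)⁻¹) (π a) (π b) := by
  constructor
  · rw [MulAut.mul_apply, MulAut.mul_apply, pA_inv_of, (Equiv.Perm.inv_eq_iff_eq.mpr rfl : π⁻¹ (π a) = a), h.1]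
    simp [_root_.map_mul, _root_.map_inv]
  · intro l hl
    rw [MulAut.mul_apply, MulAut.mul_apply, pA_inv_of,
      h.2 _ (fun hx => hl (by rw [← hx]; exact Equiv.Perm.inv_eq_iff_eq.mp rfl)),
      pA_of, (Equiv.Perm.inv_eq_iff_eq.mp rfl : l = π (π⁻¹ l)).symm]

lemma cb_conj (π : Equiv.Perm (Fin n)) {c : MulAut (FreeGroup (Fin n))} (hc : c ∈ CbSub n) :
    pA π * c * (pA π)⁻¹ ∈ CbSub n := by
  apply conj_mem_closure _ _ hc
  rintro t ⟨a, b, hab, ht⟩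
  apply Subgroup.subset_closure
  exact ⟨π a, π b, fun h => hab (π.injective h), isEps_pA_conj π ht⟩

end Cb

section Ker
variable {n : ℕ}

def K (ν : VB n →* Equiv.Perm (Fin n)) : Subgroup (VB n) where
  carrier := {g | phi n g * (pA (ν g))⁻¹ ∈ CbSub n}
  one_mem' := by simp [Set.mem_setOf_eq, one_mem]
  mul_mem' := by
    intro a b ha hb
    simp only [Set.mem_setOf_eq] at *
    have h : phi n (a * b) * (pA (ν (a * b)))⁻¹
        = (phi n a * (pA (ν a))⁻¹) * (pA (ν a) * (phi n b * (pA (ν b))⁻¹) * (pA (ν a))⁻¹) := by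
      simp only [_root_.map_mul]
      group
    rw [h]
    exact mul_mem ha (cb_conj _ hb)
  inv_mem' := by
    intro a ha
    simp only [Set.mem_setOf_eq] at *
    have h : phi n a⁻¹ * (pA (ν a⁻¹))⁻¹
        = pA (ν a)⁻¹ * (phi n a * (pA (ν a))⁻¹)⁻¹ * (pA (ν a)⁻¹)⁻¹ := by
      simp only [_root_.map_inv]
      group
    rw [h, ← MonoidHom.map_inv pA]
    exact cb_conj _ (inv_mem ha)

lemma mem_K (ν : VB n →* Equiv.Perm (Fin n)) (hν : IsNu ν) (g : VB n) : g ∈ K ν := by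
  apply PresentedGroup.generated_by
  intro x
  rcases x with i | i
  · show phi n (PresentedGroup.of (Sum.inl i)) * (pA (ν (PresentedGroup.of (Sum.inl i))))⁻¹
      ∈ CbSub n
    rw [phi_inl, (hν i).1]
    have e0 : pA (Equiv.swap (⟨(i:ℕ), by have := i.isLt; omega⟩ : Fin n)
        ⟨(i:ℕ)+1, by have := i.isLt; omega⟩) = al2 (lo i) (hi i) := rfl
    rw [e0]
    have e1 : sg2 (lo i) (hi i) (lo_ne_hi i) * (al2 (lo i) (hi i))⁻¹
        = (eps (hi i) (lo i) (lo_ne_hi i).symm)⁻¹ := by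
      rw [← B1 (lo i) (hi i) (lo_ne_hi i)]
      group
    rw [e1]
    exact inv_mem (Subgroup.subset_closure ⟨hi i, lo i, (lo_ne_hi i).symm, isEps_eps _ _ _⟩)
  · show phi n (PresentedGroup.of (Sum.inr i)) * (pA (ν (PresentedGroup.of (Sum.inr i))))⁻¹
      ∈ CbSub n
    rw [phi_inr, (hν i).2]
    have e0 : pA (Equiv.swap (⟨(i:ℕ), by have := i.isLt; omega⟩ : Fin n)
        ⟨(i:ℕ)+1, by have := i.isLt; omega⟩) = al2 (lo i) (hi i) := rfl
    rw [e0, mul_inv_cancel]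
    exact one_mem _

lemma map_ker_eq (hn : 2 ≤ n) (ν : VB n →* Equiv.Perm (Fin n)) (hν : IsNu ν) :
    Subgroup.map (phi n) ν.ker = CbSub n := by
  apply le_antisymm
  · rintro x ⟨g, hg, rfl⟩
    have h := mem_K ν hν g
    have hg1 : ν g = 1 := hg
    have h2 : phi n g * (pA (ν g))⁻¹ ∈ CbSub n := h
    rw [hg1, _root_.map_one, inv_one, mul_one] at h2
    exact h2
  · rw [CbSub]
    refine (Subgroup.closure_le _).mpr ?_
    rintro e ⟨a, b, hab, he⟩
    have hne : (b : ℕ) + 1 ≠ (a : ℕ) + 1 := by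
      intro h; exact hab (Fin.ext (by omega)).symm
    refine ⟨lam ((b:ℕ)+1) ((a:ℕ)+1), ?_, ?_⟩
    · show ν (lam ((b:ℕ)+1) ((a:ℕ)+1)) = 1
      exact nu_lam ν hν _ _ (by omega) (by omega) hne
        (by have := b.isLt; omega) (by have := a.isLt; omega)
    · rw [isEps_eq hab he]
      rcases Nat.lt_or_ge (b:ℕ) (a:ℕ) with h | h
      · rw [phi_lam_lt _ _ (by omega) (by omega) (by have := a.isLt; omega)]
        exact eps_congr _ _ (Fin.ext (by simp)) (Fin.ext (by simp))
      · have h' : (a:ℕ) < (b:ℕ) := by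
          rcases Nat.lt_or_ge (a:ℕ) (b:ℕ) with h2 | h2
          · exact h2
          · exact absurd (Fin.ext (by omega) : a = b) hab
        rw [phi_lam_gt _ _ (by omega) (by omega) (by have := b.isLt; omega)]
        exact eps_congr _ _ (Fin.ext (by simp)) (Fin.ext (by simp))

end Ker

section Dpart
variable {n : ℕ}

lemma comm_conj {G : Type*} [Group G] {x y : G} (h : x * y = y * x) :
    y⁻¹ * x * y = x ∧ y * x * y⁻¹ = x := by
  constructor
  · rw [mul_assoc, h, ← mul_assoc, inv_mul_cancel, one_mul]
  · rw [← h, mul_assoc, mul_inv_cancel, mul_one]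

def DG (n i : ℕ) : Set (MulAut (FreeGroup (Fin n))) :=
  {e | ∃ k : ℕ, 1 ≤ k ∧ k ≤ i ∧ ∃ (hi : i < n) (hk : k - 1 < n),
    (IsEps e ⟨i, hi⟩ ⟨k - 1, hk⟩ ∨ IsEps e ⟨k - 1, hk⟩ ⟨i, hi⟩)}

lemma dsub_eq (i : ℕ) : Dsub n i = Subgroup.closure (DG n i) := rfl

lemma mem_D_left (i : ℕ) (him : i < n) (c : Fin n) (hc : (c : ℕ) < i)
    (h : (⟨i, him⟩ : Fin n) ≠ c) : eps ⟨i, him⟩ c h ∈ Dsub n i := by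
  apply Subgroup.subset_closure
  refine ⟨(c : ℕ) + 1, by omega, by omega, him, by omega, Or.inl ?_⟩
  have e1 : (⟨(c : ℕ) + 1 - 1, by omega⟩ : Fin n) = c := Fin.ext (by simp)
  rw [e1]
  exact isEps_eps _ _ _

lemma mem_D_right (i : ℕ) (him : i < n) (c : Fin n) (hc : (c : ℕ) < i)
    (h : c ≠ (⟨i, him⟩ : Fin n)) : eps c ⟨i, him⟩ h ∈ Dsub n i := by
  apply Subgroup.subset_closure
  refine ⟨(c : ℕ) + 1, by omega, by omega, him, by omega, Or.inr ?_⟩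
  have e1 : (⟨(c : ℕ) + 1 - 1, by omega⟩ : Fin n) = c := Fin.ext (by simp)
  rw [e1]
  exact isEps_eps _ _ _

lemma D_conj_gen (i : ℕ) (a b : Fin n) (hab : a ≠ b) (ha : (a : ℕ) ≤ i) (hb : (b : ℕ) ≤ i) :
    ∀ t ∈ DG n i,
      (eps a b hab)⁻¹ * t * eps a b hab ∈ Dsub n i ∧
      eps a b hab * t * (eps a b hab)⁻¹ ∈ Dsub n i := by
  rintro t ⟨k, hk1, hki, him, hk', hor⟩
  have hDt : t ∈ Dsub n i := Subgroup.subset_closure ⟨k, hk1, hki, him, hk', hor⟩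
  by_cases hma : a = (⟨i, him⟩ : Fin n)
  · have hbv : (b : ℕ) < i := by
      have h1 : (b : ℕ) ≠ i := by
        intro h
        exact hab ((by rw [hma]; exact Fin.ext (by simp [h]) : b = a)).symm
      omega
    have hE : eps a b hab ∈ Dsub n i := by
      subst hma; exact mem_D_left i him b hbv hab
    exact ⟨mul_mem (mul_mem (inv_mem hE) hDt) hE,
           mul_mem (mul_mem hE hDt) (inv_mem hE)⟩
  by_cases hmb : b = (⟨i, him⟩ : Fin n)
  · have hav : (a : ℕ) < i := by
      have h1 : (a : ℕ) ≠ i := by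
        intro h
        exact hab (by rw [hmb]; exact Fin.ext (by simp [h]) : a = b)
      omega
    have hE : eps a b hab ∈ Dsub n i := by
      subst hmb; exact mem_D_right i him a hav hab
    exact ⟨mul_mem (mul_mem (inv_mem hE) hDt) hE,
           mul_mem (mul_mem hE hDt) (inv_mem hE)⟩
  have hav : (a : ℕ) < i := by
    have h1 : (a : ℕ) ≠ i := fun h => hma (Fin.ext (by simp [h]))
    omega
  have hbv : (b : ℕ) < i := by
    have h1 : (b : ℕ) ≠ i := fun h => hmb (Fin.ext (by simp [h]))
    omega
  have hcv : k - 1 < i := by omega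
  have hcm : (⟨k - 1, hk'⟩ : Fin n) ≠ ⟨i, him⟩ := fin_ne (by simp; omega)
  have hma' : (⟨i, him⟩ : Fin n) ≠ a := fun h => hma h.symm
  have hmb' : (⟨i, him⟩ : Fin n) ≠ b := fun h => hmb h.symm
  rcases hor with hor | hor
  · -- t = eps m c
    rw [isEps_eq hcm.symm hor]
    by_cases hca : (⟨k - 1, hk'⟩ : Fin n) = a
    · rw [eps_congr _ hma' rfl hca]
      constructor
      · rw [I2 _ _ _ hma' hmb' hab]
        exact mul_mem (mul_mem (mem_D_left i him b hbv _) (mem_D_left i him a hav _))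
          (inv_mem (mem_D_left i him b hbv _))
      · rw [I2' _ _ _ hma' hmb' hab]
        exact mul_mem (mul_mem (inv_mem (mem_D_left i him b hbv _)) (mem_D_left i him a hav _))
          (mem_D_left i him b hbv _)
    · have hcomm : eps ⟨i, him⟩ ⟨k - 1, hk'⟩ hcm.symm * eps a b hab
          = eps a b hab * eps ⟨i, him⟩ ⟨k - 1, hk'⟩ hcm.symm :=
        comm_ee _ _ _ _ _ _ hma' hca hmb
      refine ⟨?_, ?_⟩
      · rw [(comm_conj hcomm).1]
        exact mem_D_left i him _ hcv _
      · rw [(comm_conj hcomm).2]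
        exact mem_D_left i him _ hcv _
  · -- t = eps c m
    rw [isEps_eq hcm hor]
    by_cases hca : (⟨k - 1, hk'⟩ : Fin n) = a
    · rw [eps_congr _ hma hca rfl]
      constructor
      · rw [I4 _ _ _ hma hmb hab]
        exact mul_mem (mul_mem (mem_D_left i him b hbv _) (mem_D_right i him a hav _))
          (inv_mem (mem_D_left i him b hbv _))
      · rw [I4' _ _ _ hma hmb hab]
        exact mul_mem (mul_mem (inv_mem (mem_D_left i him b hbv _)) (mem_D_right i him a hav _))
          (mem_D_left i him b hbv _)
    · by_cases hcb : (⟨k - 1, hk'⟩ : Fin n) = b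
      · rw [eps_congr _ hmb hcb rfl]
        have h5 := comm_conj (mcc3 (⟨i, him⟩ : Fin n) a b hma hmb hab).symm
        constructor
        · have key : (eps a b hab)⁻¹ * eps b ⟨i, him⟩ hmb * eps a b hab
              = ((eps a b hab)⁻¹ * eps a ⟨i, him⟩ hma * eps a b hab)⁻¹ *
                (eps a ⟨i, him⟩ hma * eps b ⟨i, him⟩ hmb) := by
            rw [← h5.1]; group
          rw [key, I4 _ _ _ hma hmb hab]
          exact mul_mem
            (inv_mem (mul_mem (mul_mem (mem_D_left i him b hbv _) (mem_D_right i him a hav _))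
              (inv_mem (mem_D_left i him b hbv _))))
            (mul_mem (mem_D_right i him a hav _) (mem_D_right i him b hbv _))
        · have key : eps a b hab * eps b ⟨i, him⟩ hmb * (eps a b hab)⁻¹
              = (eps a b hab * eps a ⟨i, him⟩ hma * (eps a b hab)⁻¹)⁻¹ *
                (eps a ⟨i, him⟩ hma * eps b ⟨i, him⟩ hmb) := by
            rw [← h5.2]; group
          rw [key, I4' _ _ _ hma hmb hab]
          exact mul_mem
            (inv_mem (mul_mem (mul_mem (inv_mem (mem_D_left i him b hbv _))
              (mem_D_right i him a hav _)) (mem_D_left i him b hbv _)))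
            (mul_mem (mem_D_right i him a hav _) (mem_D_right i him b hbv _))
      · have hcomm : eps ⟨k - 1, hk'⟩ ⟨i, him⟩ hcm * eps a b hab
            = eps a b hab * eps ⟨k - 1, hk'⟩ ⟨i, him⟩ hcm :=
          comm_ee _ _ _ _ _ _ hca hma' (fun h => hcb h.symm)
        refine ⟨?_, ?_⟩
        · rw [(comm_conj hcomm).1]
          exact mem_D_right i him _ hcv _
        · rw [(comm_conj hcomm).2]
          exact mem_D_right i him _ hcv _

/-- the generators of the image of `VPsub n (i+1)` -/
def EPS (n i : ℕ) : Set (MulAut (FreeGroup (Fin n))) :=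
  {e | ∃ (a b : Fin n) (h : a ≠ b), (a : ℕ) ≤ i ∧ (b : ℕ) ≤ i ∧ e = eps a b h}

lemma D_norm (i : ℕ) {c : MulAut (FreeGroup (Fin n))} (hc : c ∈ Subgroup.closure (EPS n i)) :
    ∀ d ∈ Dsub n i, c⁻¹ * d * c ∈ Dsub n i ∧ c * d * c⁻¹ ∈ Dsub n i := by
  induction hc using Subgroup.closure_induction with
  | mem e he =>
    obtain ⟨a, b, hab, ha, hb, rfl⟩ := he
    intro d hd
    constructor
    · have h := conj_mem_closure (T := DG n i) (eps a b hab)⁻¹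
        (fun t ht => by rw [inv_inv]; exact (D_conj_gen i a b hab ha hb t ht).1) hd
      rwa [inv_inv] at h
    · exact conj_mem_closure (T := DG n i) (eps a b hab)
        (fun t ht => (D_conj_gen i a b hab ha hb t ht).2) hd
  | one => intro d hd; simpa using hd
  | mul x y hx hy ihx ihy =>
    intro d hd
    constructor
    · have h := (ihy _ ((ihx d hd).1)).1
      rw [show y⁻¹ * (x⁻¹ * d * x) * y = (x * y)⁻¹ * d * (x * y) by group] at h
      exact h
    · have h := (ihx _ ((ihy d hd).2)).2
      rw [show x * (y * d * y⁻¹) * x⁻¹ = (x * y) * d * (x * y)⁻¹ by group] at h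
      exact h
  | inv x hx ihx =>
    intro d hd
    refine ⟨?_, ?_⟩
    · have h := (ihx d hd).2
      rw [show x * d * x⁻¹ = (x⁻¹)⁻¹ * d * x⁻¹ by group] at h
      exact h
    · have h := (ihx d hd).1
      rw [show x⁻¹ * d * x = x⁻¹ * d * (x⁻¹)⁻¹ by group] at h
      exact h

lemma phi_lam_eps (k l : ℕ) (hk : 1 ≤ k) (hl : 1 ≤ l) (hkl : k ≠ l)
    (hk' : k ≤ n) (hl' : l ≤ n) :
    phi n (lam k l) = eps ⟨l - 1, by omega⟩ ⟨k - 1, by omega⟩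
      (fin_ne (by simp only []; omega)) := by
  rcases Nat.lt_or_ge k l with h | h
  · exact phi_lam_lt k l hk h hl'
  · exact phi_lam_gt k l hl (by omega) hk'

lemma vp_maps (i : ℕ) (hin : i + 1 ≤ n) :
    Subgroup.map (phi n) (VPsub n (i + 1)) ≤ Subgroup.closure (EPS n i) := by
  rw [VPsub, MonoidHom.map_closure]
  refine (Subgroup.closure_le _).mpr ?_
  rintro x ⟨y, ⟨k, l, hk, hki, hl, hli, hkl, rfl⟩, rfl⟩
  apply Subgroup.subset_closure
  rw [phi_lam_eps k l hk hl hkl (by omega) (by omega)]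
  exact ⟨_, _, _, by simp; omega, by simp; omega, rfl⟩

lemma map_vstar (hn : 2 ≤ n) (i : ℕ) (h1 : 1 ≤ i) (h2 : i ≤ n - 1) :
    Subgroup.map (phi n) (Vstar n i) = Dsub n i := by
  have him : i < n := by omega
  apply le_antisymm
  · rw [Vstar, MonoidHom.map_closure]
    refine (Subgroup.closure_le _).mpr ?_
    rintro x ⟨y, ⟨g, hg, k, hk1, hki, hor⟩, rfl⟩
    have hpg : phi n g ∈ Subgroup.closure (EPS n i) :=
      vp_maps i (by omega) ⟨g, hg, rfl⟩
    rcases hor with rfl | rfl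
    · have hd : phi n (lam k (i + 1)) ∈ Dsub n i := by
        rw [phi_lam_eps k (i+1) (by omega) (by omega) (by omega) (by omega) (by omega)]
        have e1 : (⟨i + 1 - 1, by omega⟩ : Fin n) = ⟨i, him⟩ := Fin.ext (by simp)
        rw [eps_congr _ (fin_ne (by simp; omega)) e1 rfl]
        exact mem_D_left i him _ (by simp; omega) _
      have h := (D_norm i hpg _ hd).1
      rw [show (phi n g)⁻¹ * phi n (lam k (i+1)) * phi n g
          = phi n (g⁻¹ * lam k (i+1) * g) by simp [_root_.map_mul, _root_.map_inv]] at h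
      exact h
    · have hd : phi n (lam (i + 1) k) ∈ Dsub n i := by
        rw [phi_lam_eps (i+1) k (by omega) (by omega) (by omega) (by omega) (by omega)]
        have e1 : (⟨i + 1 - 1, by omega⟩ : Fin n) = ⟨i, him⟩ := Fin.ext (by simp)
        rw [eps_congr _ (fin_ne (by simp; omega)) rfl e1]
        exact mem_D_right i him _ (by simp; omega) _
      have h := (D_norm i hpg _ hd).1
      rw [show (phi n g)⁻¹ * phi n (lam (i+1) k) * phi n g
          = phi n (g⁻¹ * lam (i+1) k * g) by simp [_root_.map_mul, _root_.map_inv]] at h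
      exact h
  · rw [dsub_eq]
    refine (Subgroup.closure_le _).mpr ?_
    rintro e ⟨k, hk1, hki, him', hk', hor⟩
    rcases hor with hor | hor
    · refine ⟨lam k (i + 1), ?_, ?_⟩
      · exact Subgroup.subset_closure ⟨1, one_mem _, k, hk1, hki, Or.inl (by group)⟩
      · rw [phi_lam_eps k (i+1) (by omega) (by omega) (by omega) (by omega) (by omega)]
        have hcm : (⟨i, him'⟩ : Fin n) ≠ ⟨k - 1, hk'⟩ := fin_ne (by simp; omega)
        rw [isEps_eq hcm hor]
        exact (eps_congr _ _ (Fin.ext (by simp)) rfl).symm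
    · refine ⟨lam (i + 1) k, ?_, ?_⟩
      · exact Subgroup.subset_closure ⟨1, one_mem _, k, hk1, hki, Or.inr (by group)⟩
      · rw [phi_lam_eps (i+1) k (by omega) (by omega) (by omega) (by omega) (by omega)]
        have hcm : (⟨k - 1, hk'⟩ : Fin n) ≠ ⟨i, him'⟩ := fin_ne (by simp; omega)
        rw [isEps_eq hcm hor]
        exact (eps_congr _ _ rfl (Fin.ext (by simp))).symm

end Dpart

end St17

/-- there is a unique homomorphism φ : VB_n → Aut(F_n) with
φ(σ_i) = σ̂_i and φ(ρ_i) = α_i; it maps VP_n onto Cb_n = ⟨ε_{ij}⟩ and each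
V_i^* onto D_i. -/
theorem stmt_17 (n : ℕ) (hn : 2 ≤ n)
    (ν : VB n →* Equiv.Perm (Fin n)) (hν : IsNu ν) :
    ∃ φ : VB n →* MulAut (FreeGroup (Fin n)),
      IsPhiVW φ ∧
      (∀ ψ : VB n →* MulAut (FreeGroup (Fin n)), IsPhiVW ψ → ψ = φ) ∧
      Subgroup.map φ ν.ker = CbSub n ∧
      (∀ i : ℕ, 1 ≤ i → i ≤ n - 1 → Subgroup.map φ (Vstar n i) = Dsub n i) := by
  exact ⟨St17.phi n, St17.isPhiVW_phi, fun ψ hψ => St17.phi_unique ψ hψ,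
    St17.map_ker_eq hn ν hν, fun i h1 h2 => St17.map_vstar hn i h1 h2⟩
end
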